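/- Let G be a finite simple graph, d ≥ 1 an integer, and T a set of vertices of G such that there are more than 2d vertices in V(G) ∖ T whose neighborhoods contain T. Then T is monochromatic. -/
import Mathlib


variable {V : Type*}

/-- A `d`-cut of a simple graph `G`: a partition `(A, B)` of the vertex set into two
nonempty parts such that every vertex of `A` has at most `d` neighbors in `B` and
every vertex of `B` has at most `d` neighbors in `A`. -/
def IsDCut (G : SimpleGraph V) (d : ℕ) (A B : Set V) : Prop :=
  A.Nonempty ∧ B.Nonempty ∧ Disjoint A B ∧ A ∪ B = Set.univ ∧
    (∀ v ∈ A, (G.neighborSet v ∩ B).ncard ≤ d) ∧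
    (∀ v ∈ B, (G.neighborSet v ∩ A).ncard ≤ d)

/-- A vertex set `T` is monochromatic if every `d`-cut of `G` has `T` entirely on one side. -/
def Monochromatic (G : SimpleGraph V) (d : ℕ) (T : Set V) : Prop :=
  ∀ A B : Set V, IsDCut G d A B → T ⊆ A ∨ T ⊆ B

/-- The edge cut of a cut `(A, B)`: the set of edges of `G` with one endpoint in `A`
and the other endpoint in `B`. -/
def edgeCut (G : SimpleGraph V) (A B : Set V) : Set (Sym2 V) :=
  {e | e ∈ G.edgeSet ∧ ∃ u v, e = s(u, v) ∧ u ∈ A ∧ v ∈ B}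

/-- A minimal `d`-cut: no `d`-cut has an edge cut that is a proper subset of its edge cut. -/
def IsMinimalDCut (G : SimpleGraph V) (d : ℕ) (A B : Set V) : Prop :=
  IsDCut G d A B ∧ ∀ A' B' : Set V, IsDCut G d A' B' → ¬ edgeCut G A' B' ⊂ edgeCut G A B

/-- A maximal `d`-cut: no `d`-cut has an edge cut that properly contains its edge cut. -/
def IsMaximalDCut (G : SimpleGraph V) (d : ℕ) (A B : Set V) : Prop :=
  IsDCut G d A B ∧ ∀ A' B' : Set V, IsDCut G d A' B' → ¬ edgeCut G A B ⊂ edgeCut G A' B'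

/-- If more than `2d` vertices outside `T` have their neighborhood containing `T`,
then `T` is monochromatic. -/
theorem common_neighborhood_monochromatic [Fintype V] (G : SimpleGraph V) (d : ℕ)
    (hd : 1 ≤ d) (T : Set V)
    (hmany : 2 * d < {v | v ∉ T ∧ T ⊆ G.neighborSet v}.ncard) :
    Monochromatic G d T := by
  intro A B ⟨hA, hB, hdisj, huniv, hAd, hBd⟩
  by_contra hcon
  push_neg at hcon
  obtain ⟨h1', h2'⟩ := hcon
  obtain ⟨t1, ht1T, ht1A⟩ := Set.not_subset.mp h1'
  obtain ⟨t2, ht2T, ht2B⟩ := Set.not_subset.mp h2'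
  have ht1B : t1 ∈ B := by
    have : t1 ∈ A ∪ B := huniv ▸ Set.mem_univ t1
    rcases this with h | h
    · exact absurd h ht1A
    · exact h
  have ht2A : t2 ∈ A := by
    have : t2 ∈ A ∪ B := huniv ▸ Set.mem_univ t2
    rcases this with h | h
    · exact h
    · exact absurd h ht2B
  set S : Set V := {v | v ∉ T ∧ T ⊆ G.neighborSet v} with hS
  have hSA : S ∩ A ⊆ G.neighborSet t1 ∩ A := by
    rintro v ⟨⟨_, hv⟩, hvA⟩
    exact ⟨(G.adj_symm (hv ht1T)), hvA⟩
  have hSB : S ∩ B ⊆ G.neighborSet t2 ∩ B := by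
    rintro v ⟨⟨_, hv⟩, hvB⟩
    exact ⟨(G.adj_symm (hv ht2T)), hvB⟩
  have h1 : (S ∩ A).ncard ≤ d :=
    le_trans (Set.ncard_le_ncard hSA (Set.toFinite _)) (hBd t1 ht1B)
  have h2 : (S ∩ B).ncard ≤ d :=
    le_trans (Set.ncard_le_ncard hSB (Set.toFinite _)) (hAd t2 ht2A)
  have hsplit : S.ncard ≤ (S ∩ A).ncard + (S ∩ B).ncard := by
    have : S = (S ∩ A) ∪ (S ∩ B) := by
      rw [← Set.inter_union_distrib_left, huniv, Set.inter_univ]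
    calc S.ncard = ((S ∩ A) ∪ (S ∩ B)).ncard := by rw [← this]
      _ ≤ (S ∩ A).ncard + (S ∩ B).ncard := Set.ncard_union_le _ _
  omega
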